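/- Let I be an ideal on ω and let ρ^(I) be defined from an almost disjoint family {A_α : α < 𝔠} on ω, an enumeration I⁺ = {B_α : α < 𝔠}, and a partition {Pₙ : n ∈ ω} of ω into I-sets, by ρ^(I)(A_α ∖ K) = B_α ∖ ⋃{Pₙ : n < max(K ∩ A_α)}. Then ρ^(I) is a partition regular function on the family {A ∖ K : A ∈ 𝒜, K finite}, and I_{ρ^(I)} = I. -/

import Mathlib

open Set Filter

/-- An ideal on a set `X`: contains `∅` and all finite sets, does not contain `X`,
and is closed under subsets and finite unions. -/
def IsIdeal {X : Type*} (I : Set (Set X)) : Prop :=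
  ∅ ∈ I ∧ (Set.univ : Set X) ∉ I ∧ (∀ A : Set X, A.Finite → A ∈ I) ∧
    (∀ A B : Set X, A ⊆ B → B ∈ I → A ∈ I) ∧
    (∀ A B : Set X, A ∈ I → B ∈ I → A ∪ B ∈ I)

/-- A partition regular function `ρ : 𝓕 → [Λ]^ω` (modelled as a total function
`ρ : Set Ω → Set Λ` whose relevant values are those on `𝓕`). `𝓕` is a nonempty family
of infinite subsets of `Ω` closed under removing finite sets; `ρ` takes infinite values on `𝓕`,
is monotone (M), Ramsey partition regular (R) and sparse (S). -/
structure IsPartReg {Ω Λ : Type*} (𝓕 : Set (Set Ω)) (ρ : Set Ω → Set Λ) : Prop where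
  nonempty : 𝓕.Nonempty
  infinite : ∀ F ∈ 𝓕, F.Infinite
  diff_mem : ∀ F ∈ 𝓕, ∀ K : Set Ω, K.Finite → F \ K ∈ 𝓕
  rho_infinite : ∀ F ∈ 𝓕, (ρ F).Infinite
  mono : ∀ E ∈ 𝓕, ∀ F ∈ 𝓕, E ⊆ F → ρ E ⊆ ρ F
  ramsey : ∀ F ∈ 𝓕, ∀ A B : Set Λ, ρ F = A ∪ B → ∃ E ∈ 𝓕, ρ E ⊆ A ∨ ρ E ⊆ B
  sparse : ∀ E ∈ 𝓕, ∃ F ∈ 𝓕, F ⊆ E ∧ ∀ a ∈ ρ F, ∃ K : Set Ω, K.Finite ∧ a ∉ ρ (F \ K)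

/-- The ideal `I_ρ = {A ⊆ Λ : ∀ F ∈ 𝓕, ρ(F) ⊄ A}` associated to `ρ`. -/
def idealOf {Ω Λ : Type*} (𝓕 : Set (Set Ω)) (ρ : Set Ω → Set Λ) : Set (Set Λ) :=
  {A | ∀ F ∈ 𝓕, ¬ ρ F ⊆ A}

/-- The domain `{A_α ∖ K : α, K finite}` of `ρ^(I)`. -/
def adDomain {ι : Type*} (A : ι → Set ℕ) : Set (Set ℕ) :=
  {S | ∃ (α : ι) (K : Set ℕ), K.Finite ∧ S = A α \ K}

private lemma ideal_biUnion {X : Type*} {I : Set (Set X)} (hI : IsIdeal I)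
    {s : Set ℕ} (hs : s.Finite) {f : ℕ → Set X} (hf : ∀ i ∈ s, f i ∈ I) :
    (⋃ i ∈ s, f i) ∈ I := by
  revert hf
  refine Set.Finite.induction_on
    (motive := fun s _ => (∀ i ∈ s, f i ∈ I) → (⋃ i ∈ s, f i) ∈ I) s hs
    (fun _ => by simpa using hI.1) ?_
  intro a s ha hsf ih hf
  rw [Set.biUnion_insert]
  exact hI.2.2.2.2 _ _ (hf _ (Set.mem_insert _ _))
    (ih fun i hi => hf i (Set.mem_insert_of_mem _ hi))

/-- `ρ^(I)`, defined from an almost disjoint family `{A_α}`, an enumeration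
`{B_α}` of `I⁺` and a partition `{Pₙ}` of `ω` into `I`-sets by
`ρ^(I)(A_α ∖ K) = B_α ∖ ⋃ {Pₙ : n < max (K ∩ A_α)}` (with `max ∅ = 0`, realized by `sSup`),
is a partition regular function and `I_{ρ^(I)} = I`. -/
theorem stmt_15 {ι : Type*} (I : Set (Set ℕ)) (hI : IsIdeal I)
    (A : ι → Set ℕ) (hAinf : ∀ α, (A α).Infinite)
    (hAD : ∀ α β, α ≠ β → (A α ∩ A β).Finite) (hAinj : Function.Injective A)
    (B : ι → Set ℕ) (hBpos : ∀ α, B α ∉ I)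
    (hBsurj : ∀ C : Set ℕ, C ∉ I → ∃ α, B α = C)
    (P : ℕ → Set ℕ) (hPmem : ∀ n, P n ∈ I)
    (hPdisj : ∀ m n, m ≠ n → Disjoint (P m) (P n)) (hPcover : (⋃ n, P n) = Set.univ)
    (ρ : Set ℕ → Set ℕ)
    (hρ : ∀ (α : ι) (K : Set ℕ), K.Finite →
      ρ (A α \ K) = B α \ ⋃ n ∈ {m : ℕ | m < sSup (K ∩ A α)}, P n) :
    IsPartReg (adDomain A) ρ ∧
      ∀ C : Set ℕ, C ∈ I ↔ ∀ S ∈ adDomain A, ¬ ρ S ⊆ C := by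
  have hsubcl := hI.2.2.2.1
  have huncl := hI.2.2.2.2
  -- ρ of a domain element is not in I
  have hrhoNI : ∀ (α : ι) (K : Set ℕ), K.Finite → ρ (A α \ K) ∉ I := by
    intro α K hK h
    rw [hρ α K hK] at h
    have hU : (⋃ n ∈ {m : ℕ | m < sSup (K ∩ A α)}, P n) ∈ I :=
      ideal_biUnion hI (Set.finite_Iio _) (fun i _ => hPmem i)
    exact hBpos α (hsubcl _ _ (Set.subset_diff_union _ _) (huncl _ _ h hU))
  have hSup_le : ∀ {s t : Set ℕ}, t.Finite → s ⊆ t → sSup s ≤ sSup t := by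
    intro s t ht hst
    rcases s.eq_empty_or_nonempty with rfl | hs
    · simp [csSup_empty]
    · exact csSup_le_csSup ht.bddAbove hs hst
  have hrhozero : ∀ β : ι, ρ (A β \ ∅) = B β := by
    intro β
    rw [hρ β ∅ Set.finite_empty]
    simp
  constructor
  · constructor
    · obtain ⟨α, -⟩ := hBsurj Set.univ hI.2.1
      exact ⟨A α \ ∅, α, ∅, Set.finite_empty, rfl⟩
    · rintro F ⟨α, K, hK, rfl⟩
      exact (hAinf α).diff hK
    · rintro F ⟨α, K, hK, rfl⟩ K' hK'
      exact ⟨α, K ∪ K', hK.union hK', by rw [Set.diff_diff]⟩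
    · rintro F ⟨α, K, hK, rfl⟩
      intro hfin
      exact hrhoNI α K hK (hI.2.2.1 _ hfin)
    · rintro E ⟨α, K, hK, rfl⟩ F ⟨β, K', hK', rfl⟩ hEF
      have hab : α = β := by
        by_contra hne
        exact (hAinf α).diff hK ((hAD α β hne).subset
          (fun x hx => ⟨hx.1, (hEF hx).1⟩))
      subst hab
      have hKK : K' ∩ A α ⊆ K ∩ A α := by
        rintro x ⟨hxK', hxA⟩
        refine ⟨?_, hxA⟩
        by_contra hxK
        exact (hEF ⟨hxA, hxK⟩).2 hxK'
      rw [hρ α K hK, hρ α K' hK']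
      apply Set.diff_subset_diff_right
      apply Set.biUnion_subset_biUnion_left
      intro m hm
      exact lt_of_lt_of_le hm (hSup_le (hK.inter_of_left _) hKK)
    · rintro F ⟨α, K, hK, rfl⟩ C D hCD
      have hor : (C ∩ ρ (A α \ K)) ∉ I ∨ (D ∩ ρ (A α \ K)) ∉ I := by
        by_contra h
        push_neg at h
        refine hrhoNI α K hK (hsubcl _ _ ?_ (huncl _ _ h.1 h.2))
        intro x hx
        rcases hCD ▸ hx with h1 | h1
        · exact Or.inl ⟨h1, hx⟩
        · exact Or.inr ⟨h1, hx⟩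
      rcases hor with h1 | h1
      · obtain ⟨β, hβ⟩ := hBsurj _ h1
        exact ⟨A β \ ∅, ⟨β, ∅, Set.finite_empty, rfl⟩,
          Or.inl (by rw [hrhozero β, hβ]; exact Set.inter_subset_left)⟩
      · obtain ⟨β, hβ⟩ := hBsurj _ h1
        exact ⟨A β \ ∅, ⟨β, ∅, Set.finite_empty, rfl⟩,
          Or.inr (by rw [hrhozero β, hβ]; exact Set.inter_subset_left)⟩
    · rintro E ⟨α, K, hK, rfl⟩
      refine ⟨A α \ K, ⟨α, K, hK, rfl⟩, subset_rfl, ?_⟩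
      intro a ha
      have : a ∈ ⋃ n, P n := hPcover ▸ Set.mem_univ a
      obtain ⟨n₀, hn₀⟩ := Set.mem_iUnion.1 this
      obtain ⟨k, hkA, hkn⟩ := (hAinf α).exists_gt n₀
      have hK2 : (K ∪ {k}).Finite := hK.union (Set.finite_singleton k)
      refine ⟨K ∪ {k}, hK2, ?_⟩
      have hEq : (A α \ K) \ (K ∪ {k}) = A α \ (K ∪ {k}) := by
        rw [Set.diff_diff, ← Set.union_assoc, Set.union_self]
      rw [hEq, hρ α (K ∪ {k}) hK2]
      intro hcon
      apply hcon.2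
      refine Set.mem_biUnion ?_ hn₀
      have hk : k ∈ (K ∪ {k}) ∩ A α := ⟨Or.inr rfl, hkA⟩
      exact lt_of_lt_of_le hkn (le_csSup ((hK2.inter_of_left _).bddAbove) hk)
  · intro C
    constructor
    · rintro hC S ⟨α, K, hK, rfl⟩ hsub
      exact hrhoNI α K hK (hsubcl _ _ hsub hC)
    · intro h
      by_contra hC
      obtain ⟨β, hβ⟩ := hBsurj C hC
      exact h (A β \ ∅) ⟨β, ∅, Set.finite_empty, rfl⟩ (by rw [hrhozero β, hβ])
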